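/- Let U ⊆ ℝⁿ be a convex set and f: U → I(ℝ) a convex interval valued function that is gH-directionally differentiable on U. Then f'(x, y − x) ⪯ f(y) −_gH f(x) for all x, y ∈ U, where f'(x, v) = lim_{t→0⁺} (1/t)(f(x + tv) −_gH f(x)) is the gH-directional derivative. -/

import Mathlib

/-- A closed bounded interval `[lo, hi]` in `ℝ`. -/
structure IntervalR where
  lo : ℝ
  hi : ℝ
  lo_le_hi : lo ≤ hi

namespace IntervalR

/-- Minkowski sum of intervals. -/
def add (A B : IntervalR) : IntervalR :=
  ⟨A.lo + B.lo, A.hi + B.hi, add_le_add A.lo_le_hi B.lo_le_hi⟩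

/-- Scalar multiple of an interval. -/
noncomputable def smul (l : ℝ) (A : IntervalR) : IntervalR :=
  if h : 0 ≤ l then ⟨l * A.lo, l * A.hi, mul_le_mul_of_nonneg_left A.lo_le_hi h⟩
  else ⟨l * A.hi, l * A.lo, by nlinarith [A.lo_le_hi, lt_of_not_ge h]⟩

/-- Generalized Hukuhara difference. -/
def gH (A B : IntervalR) : IntervalR :=
  ⟨min (A.lo - B.lo) (A.hi - B.hi), max (A.lo - B.lo) (A.hi - B.hi), min_le_max⟩

/-- Hausdorff metric on intervals. -/
def dH (A B : IntervalR) : ℝ := max |A.lo - B.lo| |A.hi - B.hi|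

/-- The partial order `A ⪯ B`. -/
def le (A B : IntervalR) : Prop := A.lo ≤ B.lo ∧ A.hi ≤ B.hi

/-- The strict order `A ≺ B`. -/
def lt (A B : IntervalR) : Prop := le A B ∧ A ≠ B

/-- The degenerate interval `[0,0]`. -/
def zero : IntervalR := ⟨0, 0, le_refl 0⟩

end IntervalR

/-- `f` is a convex interval valued function on the convex set `U`. -/
def ConvexIVF {n : ℕ} (U : Set (EuclideanSpace ℝ (Fin n)))
    (f : EuclideanSpace ℝ (Fin n) → IntervalR) : Prop :=
  ∀ x ∈ U, ∀ y ∈ U, ∀ t : ℝ, t ∈ Set.Icc (0 : ℝ) 1 →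
    IntervalR.le (f (t • x + (1 - t) • y))
      (IntervalR.add (IntervalR.smul t (f x)) (IntervalR.smul (1 - t) (f y)))

/-- `f` has gH-directional derivative `L` at `x` in the direction `v`, i.e.
`(1/t) * (f(x + t v) −_gH f(x)) → L` in the Hausdorff metric as `t → 0⁺`. -/
def HasGHDirDeriv {n : ℕ} (f : EuclideanSpace ℝ (Fin n) → IntervalR)
    (x v : EuclideanSpace ℝ (Fin n)) (L : IntervalR) : Prop :=
  Filter.Tendsto
    (fun t : ℝ => IntervalR.dH (IntervalR.smul (1 / t) (IntervalR.gH (f (x + t • v)) (f x))) L)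
    (nhdsWithin 0 (Set.Ioi 0)) (nhds 0)

/-- A real function `g` has directional derivative `d` at `x` in the direction `v`. -/
def HasDirDeriv {n : ℕ} (g : EuclideanSpace ℝ (Fin n) → ℝ)
    (x v : EuclideanSpace ℝ (Fin n)) (d : ℝ) : Prop :=
  Filter.Tendsto (fun t : ℝ => (g (x + t • v) - g x) / t) (nhdsWithin 0 (Set.Ioi 0)) (nhds d)

theorem convexIVF_dirDeriv_le_gH_diff {n : ℕ} (U : Set (EuclideanSpace ℝ (Fin n)))
    (hU : Convex ℝ U)
    (f : EuclideanSpace ℝ (Fin n) → IntervalR) (hf : ConvexIVF U f)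
    (f' : EuclideanSpace ℝ (Fin n) → EuclideanSpace ℝ (Fin n) → IntervalR)
    (hdiff : ∀ x ∈ U, ∀ v : EuclideanSpace ℝ (Fin n), HasGHDirDeriv f x v (f' x v)) :
    ∀ x ∈ U, ∀ y ∈ U,
      IntervalR.le (f' x (y - x)) (IntervalR.gH (f y) (f x)) := by
  
  intro x hx y hy
  set v := y - x with hv
  set L := f' x (y - x) with hL
  set G := IntervalR.gH (f y) (f x) with hG
  have hlim := hdiff x hx (y - x)
  set l := nhdsWithin (0:ℝ) (Set.Ioi 0) with hl
  set Q : ℝ → IntervalR :=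
    fun t => IntervalR.smul (1 / t) (IntervalR.gH (f (x + t • (y - x))) (f x)) with hQ
  -- key pointwise bound
  have key : ∀ t : ℝ, 0 < t → t ≤ 1 → (Q t).lo ≤ G.lo ∧ (Q t).hi ≤ G.hi := by
    intro t ht ht1
    have hconv := hf x hx y hy (1 - t) ⟨by linarith, by linarith⟩
    have harg : (1 - t) • x + (1 - (1 - t)) • y = x + t • (y - x) := by
      module
    rw [harg] at hconv
    have h1t : (0:ℝ) ≤ 1 - t := by linarith
    have hts : (0:ℝ) ≤ t := le_of_lt ht
    simp only [IntervalR.le, IntervalR.add, IntervalR.smul, dif_pos h1t] at hconv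
    rw [dif_pos (by linarith : (0:ℝ) ≤ 1 - (1 - t))] at hconv
    obtain ⟨hlo, hhi⟩ := hconv
    simp only [show (1 - (1 - t)) = t by ring] at hlo hhi
    set a := (f (x + t • (y - x))).lo
    set b := (f (x + t • (y - x))).hi
    set c := (f x).lo
    set d := (f x).hi
    set p := (f y).lo
    set q := (f y).hi
    have hit : (0:ℝ) ≤ 1 / t := by positivity
    have hQlo : (Q t).lo = (1 / t) * min (a - c) (b - d) := by
      simp [hQ, IntervalR.smul, IntervalR.gH, dif_pos hit, hts]
      exact Or.inl rfl
    have hQhi : (Q t).hi = (1 / t) * max (a - c) (b - d) := by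
      simp [hQ, IntervalR.smul, IntervalR.gH, dif_pos hit, hts]
      exact Or.inl rfl
    have hGlo : G.lo = min (p - c) (q - d) := rfl
    have hGhi : G.hi = max (p - c) (q - d) := rfl
    have hac : a - c ≤ t * (p - c) := by nlinarith
    have hbd : b - d ≤ t * (q - d) := by nlinarith
    have hinv : (1 / t) * t = 1 := by field_simp
    constructor
    · rw [hQlo, hGlo]
      apply le_min
      · calc (1/t) * min (a - c) (b - d) ≤ (1/t) * (t * (p - c)) :=
              mul_le_mul_of_nonneg_left (le_trans (min_le_left _ _) hac) hit
          _ = p - c := by rw [← mul_assoc, hinv, one_mul]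
      · calc (1/t) * min (a - c) (b - d) ≤ (1/t) * (t * (q - d)) :=
              mul_le_mul_of_nonneg_left (le_trans (min_le_right _ _) hbd) hit
          _ = q - d := by rw [← mul_assoc, hinv, one_mul]
    · rw [hQhi, hGhi]
      have h1 : max (a - c) (b - d) ≤ t * max (p - c) (q - d) := by
        apply max_le
        · exact le_trans hac (mul_le_mul_of_nonneg_left (le_max_left _ _) hts)
        · exact le_trans hbd (mul_le_mul_of_nonneg_left (le_max_right _ _) hts)
      calc (1/t) * max (a - c) (b - d) ≤ (1/t) * (t * max (p - c) (q - d)) :=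
            mul_le_mul_of_nonneg_left h1 hit
        _ = max (p - c) (q - d) := by rw [← mul_assoc, hinv, one_mul]
  -- limits of endpoints
  have hdH : Filter.Tendsto (fun t => IntervalR.dH (Q t) L) l (nhds 0) := hlim
  have hQloT : Filter.Tendsto (fun t => (Q t).lo) l (nhds L.lo) := by
    have h0 : Filter.Tendsto (fun t => (Q t).lo - L.lo) l (nhds 0) := by
      apply squeeze_zero_norm _ hdH
      intro t
      exact le_max_left _ _
    have := h0.add_const L.lo
    simpa using this
  have hQhiT : Filter.Tendsto (fun t => (Q t).hi) l (nhds L.hi) := by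
    have h0 : Filter.Tendsto (fun t => (Q t).hi - L.hi) l (nhds 0) := by
      apply squeeze_zero_norm _ hdH
      intro t
      exact le_max_right _ _
    have := h0.add_const L.hi
    simpa using this
  have hev : ∀ᶠ t in l, 0 < t ∧ t ≤ 1 := by
    have h1 : ∀ᶠ t in l, t ∈ Set.Ioi (0:ℝ) := self_mem_nhdsWithin
    have h2 : ∀ᶠ t in l, t < 1 := by
      apply Filter.Eventually.filter_mono nhdsWithin_le_nhds
      exact Filter.Tendsto.eventually_lt_const one_pos Filter.tendsto_id |>.mono (fun _ h => h) |>.mono (fun _ h => h)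
    filter_upwards [h1, h2] with t ht ht2
    exact ⟨ht, le_of_lt ht2⟩
  constructor
  · exact le_of_tendsto hQloT (hev.mono fun t ht => (key t ht.1 ht.2).1)
  · exact le_of_tendsto hQhiT (hev.mono fun t ht => (key t ht.1 ht.2).2)
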